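/- There exists a constant C > 0, independent of k, l, m, n, p and τ, such that for all p ∈ (0,1), τ > 0, integers n ≥ 1, m ∈ ℤ and k, l ∈ {0,…,N−1} (with N = 2^n), the residual ε_{mnkl} := (Ã_{m,n})_{kl} − ψ_m(θ_l) δ_{kl} satisfies |ε_{mnkl}| ≤ C τ |m| / N^{1−p} + (2|m|+1) e^{−τ|m|^p} / N. -/

import Mathlib

/-!
Statement 0: residual bound for the QFT-rotated multiplication operator matrix
elements in dimension d = 1 (Lemma 1 of the paper).
-/

noncomputable section

namespace QECD

/-- The index set `J_n = {−N/2,…,−1,1,…,N/2}` with `N = 2^n`. -/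
def Jn (n : ℕ) : Finset ℤ := (Finset.Icc (-(2 ^ (n - 1)) : ℤ) (2 ^ (n - 1))).erase 0

/-- The order-preserving enumeration `o : J_n → {0,…,N−1}`. -/
def oIdx (n : ℕ) (j : ℤ) : ℤ := if j < 0 then j + 2 ^ (n - 1) else j + 2 ^ (n - 1) - 1

/-- Scaled Fourier basis function `ψ_m(θ) = e^{−τ|m|^p/2} e^{imθ}`. -/
def psi (p τ : ℝ) (m : ℤ) (θ : ℝ) : ℂ :=
  (Real.exp (-(τ * |(m : ℝ)| ^ p) / 2) : ℂ) * Complex.exp (Complex.I * (m : ℂ) * (θ : ℂ))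

/-- Structure constants `c_{mj} = e^{−τ(|m|^p + |j|^p − |m+j|^p)/2}`. -/
def cst (p τ : ℝ) (m j : ℤ) : ℝ :=
  Real.exp (-(τ * (|(m : ℝ)| ^ p + |(j : ℝ)| ^ p - |((m + j : ℤ) : ℝ)| ^ p)) / 2)

/-- Truncated structure constants `c^{(n)}_{mj}`. -/
def cstN (p τ : ℝ) (n : ℕ) (m j : ℤ) : ℝ :=
  if m + j ∈ Jn n then cst p τ m j else 0

/-- Matrix elements `(Ã_{m,n})_{kl}` of the QFT-rotated multiplication operator. -/
def Atilde (p τ : ℝ) (n : ℕ) (m : ℤ) (k l : ℕ) : ℂ :=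
  (1 / (2 ^ n : ℂ)) * ∑ j ∈ Jn n,
    Complex.exp (2 * (Real.pi : ℂ) * Complex.I *
        ((((k : ℤ) - (l : ℤ)) * oIdx n j + (k : ℤ) * m : ℤ) : ℂ) / (2 ^ n : ℂ)) *
      (cstN p τ n m j : ℂ)

/-! ### Elementary real inequalities -/

lemma abs_exp_sub_one_le' (x : ℝ) : |Real.exp x - 1| ≤ |x| * Real.exp |x| := by
  have h1 := Real.add_one_le_exp x
  have h2 := Real.add_one_le_exp (-x)
  have h3 : Real.exp x * Real.exp (-x) = 1 := by rw [← Real.exp_add]; simp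
  have h4 : (0:ℝ) < Real.exp x := Real.exp_pos x
  have h5 : (0:ℝ) < Real.exp (-x) := Real.exp_pos (-x)
  rcases le_or_gt x 0 with h | h
  · rw [abs_of_nonpos h, abs_of_nonpos (by nlinarith)]
    nlinarith
  · rw [abs_of_pos h, abs_of_nonneg (by nlinarith)]
    nlinarith

lemma exp_half_le (x : ℝ) (hx : 0 ≤ x) : Real.exp (-x/2) ≤ Real.exp (-x) + x/2 := by
  have h2 := Real.add_one_le_exp (-(x/2))
  have h2' : 1 - x/2 ≤ Real.exp (-x/2) := by rw [neg_div] at *; linarith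
  have h3 : Real.exp (-x/2) * Real.exp (-x/2) = Real.exp (-x) := by
    rw [← Real.exp_add]; ring_nf
  have h6 : Real.exp (-x/2) ≤ 1 := Real.exp_le_one_iff.mpr (by linarith)
  nlinarith [sq_nonneg (Real.exp (-x/2) - 1)]

lemma bern_diff (p a b : ℝ) (hp : 0 ≤ p) (hp1 : p ≤ 1) (ha : 0 < a) (hab : a ≤ b) :
    b ^ p - a ^ p ≤ p * a ^ (p-1) * (b - a) := by
  set s : ℝ := (b - a)/a with hs_def
  have hs0 : 0 ≤ s := div_nonneg (by linarith) ha.le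
  have hs : -1 ≤ s := by linarith
  have has : a * s = b - a := by rw [hs_def]; field_simp
  have hb : b = a * (1 + s) := by rw [mul_add, mul_one, has]; ring
  have hber := rpow_one_add_le_one_add_mul_self hs hp hp1
  have h1 : b ^ p = a ^ p * (1 + s) ^ p := by
    rw [hb, Real.mul_rpow ha.le (by linarith)]
  have h2 : a ^ (p - 1) * a = a ^ p := by
    have h := Real.rpow_add ha (p-1) 1
    rw [Real.rpow_one] at h
    rw [← h]; norm_num
  have hap : 0 < a ^ p := Real.rpow_pos_of_pos ha p
  calc b ^ p - a ^ p = a ^ p * (1 + s) ^ p - a ^ p := by rw [h1]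
    _ ≤ a ^ p * (1 + p * s) - a ^ p := by nlinarith
    _ = p * a ^ p * s := by ring
    _ = p * a ^ (p-1) * (a * s) := by rw [← h2]; ring
    _ = p * a ^ (p-1) * (b - a) := by rw [has]

lemma rpow_diff_abs (p a b : ℝ) (hp : 0 ≤ p) (hp1 : p ≤ 1) (ha : 0 < a) (hb : 0 < b) :
    |a ^ p - b ^ p| ≤ p * (min a b) ^ (p-1) * |a - b| := by
  rcases le_total a b with h | h
  · rw [abs_of_nonpos (by nlinarith [Real.rpow_le_rpow ha.le h hp]), min_eq_left h,
      abs_of_nonpos (by linarith)]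
    have := bern_diff p a b hp hp1 ha h
    linarith
  · rw [abs_of_nonneg (by nlinarith [Real.rpow_le_rpow hb.le h hp]), min_eq_right h,
      abs_of_nonneg (by linarith)]
    have := bern_diff p b a hp hp1 hb h
    linarith

lemma real_rpow_add_le (p a b : ℝ) (hp : 0 ≤ p) (hp1 : p ≤ 1) (ha : 0 ≤ a) (hb : 0 ≤ b) :
    (a + b) ^ p ≤ a ^ p + b ^ p := by
  have h := NNReal.rpow_add_le_add_rpow a.toNNReal b.toNNReal hp hp1
  have h2 := NNReal.coe_le_coe.mpr h
  rw [NNReal.coe_add, NNReal.coe_rpow, NNReal.coe_rpow, NNReal.coe_rpow, NNReal.coe_add,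
    Real.coe_toNNReal _ ha, Real.coe_toNNReal _ hb] at h2
  exact h2

lemma rpow_sub_abs_le (p a b : ℝ) (hp : 0 ≤ p) (hp1 : p ≤ 1) (ha : 0 ≤ a) (hb : 0 ≤ b) :
    |a ^ p - b ^ p| ≤ |a - b| ^ p := by
  rcases le_total a b with h | h
  · rw [abs_of_nonpos (by nlinarith [Real.rpow_le_rpow ha h hp]), abs_of_nonpos (by linarith)]
    have key : b ^ p ≤ a ^ p + (b - a) ^ p := by
      have := real_rpow_add_le p a (b - a) hp hp1 ha (by linarith)
      simpa using this
    have hba : -(a - b) = b - a := by ring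
    rw [hba]
    linarith
  · rw [abs_of_nonneg (by nlinarith [Real.rpow_le_rpow hb h hp]), abs_of_nonneg (by linarith)]
    have key : a ^ p ≤ b ^ p + (a - b) ^ p := by
      have := real_rpow_add_le p b (a - b) hp hp1 hb (by linarith)
      simpa using this
    linarith

lemma bern_lower (p a : ℝ) (hp : 0 ≤ p) (hp1 : p ≤ 1) (ha : 1 ≤ a) :
    (a - 1) ^ p ≤ a ^ p - p * a ^ (p-1) := by
  have ha0 : 0 < a := by linarith
  have hs : -1 ≤ -(1/a) := by
    have h1 : 1/a ≤ 1 := by rw [div_le_one ha0]; linarith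
    linarith
  have hber := rpow_one_add_le_one_add_mul_self hs hp hp1
  have he : 1 + -(1/a) = (a-1)/a := by field_simp; ring
  rw [he, Real.div_rpow (by linarith) ha0.le] at hber
  have hap : 0 < a ^ p := Real.rpow_pos_of_pos ha0 p
  have h3 : a ^ (p - 1) * a = a ^ p := by
    have h := Real.rpow_add ha0 (p-1) 1
    rw [Real.rpow_one] at h
    rw [← h]; norm_num
  have h5 := (div_le_iff₀ hap).mp hber
  have h4 : (1 + p * -(1/a)) * a ^ p = a ^ p - p * a ^ (p-1) := by
    rw [← h3]; field_simp; ring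
  linarith [h4 ▸ h5]

lemma tele (p : ℝ) (hp : 0 < p) (hp1 : p ≤ 1) (K : ℕ) :
    ∑ r ∈ Finset.range K, p * ((r:ℝ)+1) ^ (p-1) ≤ (K:ℝ) ^ p := by
  have h := Finset.sum_range_sub (fun s : ℕ => (s:ℝ) ^ p) K
  have h0 : (0:ℝ) ^ p = 0 := Real.zero_rpow hp.ne'
  calc ∑ r ∈ Finset.range K, p * ((r:ℝ)+1) ^ (p-1)
      ≤ ∑ r ∈ Finset.range K, (((r:ℝ)+1) ^ p - (r:ℝ) ^ p) := by
        apply Finset.sum_le_sum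
        intro r _
        have := bern_lower p ((r:ℝ)+1) hp.le hp1
          (by linarith [show (0:ℝ) ≤ (r:ℝ) from Nat.cast_nonneg r])
        simp only [add_sub_cancel_right] at this
        linarith
    _ = (K:ℝ) ^ p := by
        push_cast at h
        rw [h0, sub_zero] at h
        rw [← h]

/-! ### Combinatorics of `Jn` -/

lemma two_pow_int (n : ℕ) (hn : 1 ≤ n) : (2:ℤ)^n = 2 * 2^(n-1) := by
  conv_lhs => rw [show n = (n-1)+1 by omega]
  ring

lemma mem_Jn {n : ℕ} {j : ℤ} : j ∈ Jn n ↔ j ≠ 0 ∧ -(2^(n-1)) ≤ j ∧ j ≤ 2^(n-1) := by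
  simp [Jn, Finset.mem_erase, Finset.mem_Icc, and_assoc]

lemma card_Jn (n : ℕ) (hn : 1 ≤ n) : (Jn n).card = 2^n := by
  have hM : (0:ℤ) < 2^(n-1) := by positivity
  have hc : ((2^n : ℕ) : ℤ) = 2 * 2^(n-1) := by push_cast; exact two_pow_int n hn
  rw [Jn, Finset.card_erase_of_mem (by simp [Finset.mem_Icc]), Int.card_Icc]
  omega

lemma Jn_eq (n : ℕ) : Jn n = Finset.Icc (-(2^(n-1)):ℤ) (-1) ∪ Finset.Icc 1 (2^(n-1)) := by
  ext j
  simp only [mem_Jn, Finset.mem_union, Finset.mem_Icc]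
  omega

lemma sum_Jn {β : Type*} [AddCommMonoid β] (n : ℕ) (f : ℤ → β) :
    ∑ j ∈ Jn n, f j
      = ∑ j ∈ Finset.Icc (1:ℤ) (2^(n-1)), (f (-j) + f j) := by
  rw [Jn_eq, Finset.sum_union (by
    rw [Finset.disjoint_left]
    intro a ha hb
    simp only [Finset.mem_Icc] at ha hb
    omega), Finset.sum_add_distrib]
  congr 1
  exact Finset.sum_nbij' (fun j => -j) (fun j => -j)
    (by intro a ha; simp only [Finset.mem_Icc] at *; omega)
    (by intro a ha; simp only [Finset.mem_Icc] at *; omega)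
    (by intro a _; ring) (by intro a _; ring)
    (by intro a _; rw [neg_neg])

lemma sum_Icc_range (K : ℕ) (f : ℤ → ℝ) :
    ∑ j ∈ Finset.Icc (1:ℤ) (K:ℤ), f j = ∑ r ∈ Finset.range K, f ((r:ℤ)+1) := by
  exact Finset.sum_nbij' (fun j => (j-1).toNat) (fun r => (r:ℤ)+1)
    (by intro a ha; simp only [Finset.mem_Icc, Finset.mem_range] at *; omega)
    (by intro a ha; simp only [Finset.mem_Icc, Finset.mem_range] at *; omega)
    (by intro a ha; simp only [Finset.mem_Icc] at ha; omega)
    (by intro a ha; simp only [Finset.mem_range] at ha; omega)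
    (by intro a ha; simp only [Finset.mem_Icc] at ha; congr 1; omega)

lemma sum_abs_rpow_le (p : ℝ) (hp : 0 < p) (hp1 : p ≤ 1) (n : ℕ) (hn : 1 ≤ n) :
    ∑ j ∈ Jn n, p * |(j:ℝ)| ^ (p-1) ≤ 2 * ((2^n : ℝ)) ^ p := by
  rw [sum_Jn]
  have hstep : ∀ j ∈ Finset.Icc (1:ℤ) (2^(n-1)),
      (p * |((-j : ℤ):ℝ)| ^ (p-1) + p * |(j:ℝ)| ^ (p-1)) = 2 * (p * (j:ℝ) ^ (p-1)) := by
    intro j hj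
    simp only [Finset.mem_Icc] at hj
    have h1 : (1:ℝ) ≤ (j:ℝ) := by exact_mod_cast hj.1
    rw [show ((-j : ℤ):ℝ) = -(j:ℝ) by push_cast; ring, abs_neg, abs_of_nonneg (by linarith)]
    ring
  rw [Finset.sum_congr rfl hstep, ← Finset.mul_sum]
  have hKc : ((2^(n-1) : ℕ) : ℤ) = (2^(n-1) : ℤ) := by push_cast; ring
  have h2 : ∑ j ∈ Finset.Icc (1:ℤ) (2^(n-1)), p * (j:ℝ) ^ (p-1) ≤ ((2^n : ℝ)) ^ p := by
    rw [← hKc, sum_Icc_range]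
    have h3 : ∑ r ∈ Finset.range (2^(n-1)), p * (((r:ℤ)+1 : ℤ):ℝ) ^ (p-1)
        = ∑ r ∈ Finset.range (2^(n-1)), p * ((r:ℝ)+1) ^ (p-1) := by
      apply Finset.sum_congr rfl; intro r _; norm_num
    rw [h3]
    calc ∑ r ∈ Finset.range (2^(n-1)), p * ((r:ℝ)+1) ^ (p-1)
        ≤ ((2^(n-1) : ℕ) : ℝ) ^ p := tele p hp hp1 _
      _ ≤ ((2^n : ℝ)) ^ p := by
          apply Real.rpow_le_rpow (by positivity) _ hp.le
          push_cast
          have : (2:ℝ)^(n-1) ≤ 2^n := by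
            apply pow_le_pow_right₀ (by norm_num) (by omega)
          exact this
  linarith

lemma card_notP_le (n : ℕ) (hn : 1 ≤ n) (m : ℤ) :
    ((Jn n).filter (fun j => m + j ∉ Jn n)).card ≤ 2 * m.natAbs + 1 := by
  classical
  set M : ℤ := 2^(n-1) with hM
  have hsub : (Jn n).filter (fun j => m + j ∉ Jn n) ⊆
      insert (-m) ((Finset.Icc (M - m.natAbs + 1) M) ∪
        (Finset.Icc (-M) (-M + m.natAbs - 1))) := by
    intro j hj
    simp only [Finset.mem_filter, mem_Jn, Finset.mem_insert, Finset.mem_union,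
      Finset.mem_Icc] at *
    omega
  calc ((Jn n).filter (fun j => m + j ∉ Jn n)).card
      ≤ _ := Finset.card_le_card hsub
    _ ≤ 1 + ((Finset.Icc (M - m.natAbs + 1) M) ∪
        (Finset.Icc (-M) (-M + m.natAbs - 1))).card := by
        apply (Finset.card_insert_le _ _).trans; omega
    _ ≤ 1 + ((Finset.Icc (M - m.natAbs + 1) M).card +
        (Finset.Icc (-M) (-M + m.natAbs - 1)).card) := by
        have := Finset.card_union_le (Finset.Icc (M - m.natAbs + 1) M)
          (Finset.Icc (-M) (-M + m.natAbs - 1))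
        omega
    _ ≤ 2 * m.natAbs + 1 := by
        rw [Int.card_Icc, Int.card_Icc]
        omega

lemma card_near_le (n : ℕ) (m : ℤ) :
    (((Jn n).filter (fun j => m + j ∈ Jn n)).filter
        (fun j => |j| ≤ 2 * |m|)).card ≤ 4 * m.natAbs := by
  classical
  have hsub : ((Jn n).filter (fun j => m + j ∈ Jn n)).filter (fun j => |j| ≤ 2 * |m|)
      ⊆ (Finset.Icc (-(2*(m.natAbs:ℤ))) (2*(m.natAbs:ℤ))).erase 0 := by
    intro j hj
    simp only [Finset.mem_filter, mem_Jn, Finset.mem_erase, Finset.mem_Icc,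
      Int.abs_eq_natAbs] at *
    omega
  calc _ ≤ _ := Finset.card_le_card hsub
    _ ≤ 4 * m.natAbs := by
        rw [Finset.card_erase_of_mem (by simp), Int.card_Icc]
        omega

lemma mcount (p A mm Nn : ℝ) (hp : 0 < p) (hp1 : p < 1) (h0 : 0 ≤ A) (hm : 1 ≤ mm)
    (hN : 1 ≤ Nn) (hA1 : A ≤ 4*mm + 1) (hA2 : A ≤ Nn) :
    A * mm ^ p ≤ 5 * mm * Nn ^ p := by
  rcases le_total mm Nn with h | h
  · have h1 : mm ^ p ≤ Nn ^ p := Real.rpow_le_rpow (by linarith) h hp.le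
    have h2 : (0:ℝ) < mm ^ p := Real.rpow_pos_of_pos (by linarith) p
    have h3 : (0:ℝ) < Nn ^ p := Real.rpow_pos_of_pos (by linarith) p
    nlinarith
  · have h1 : mm ^ (p-1) ≤ Nn ^ (p-1) :=
      Real.rpow_le_rpow_of_nonpos (by linarith) h (by linarith)
    have e1 : mm ^ p = mm * mm ^ (p-1) := by
      have h := Real.rpow_add (by linarith : (0:ℝ) < mm) 1 (p-1)
      rw [Real.rpow_one] at h
      rw [← h]; norm_num
    have e2 : Nn ^ p = Nn * Nn ^ (p-1) := by
      have h := Real.rpow_add (by linarith : (0:ℝ) < Nn) 1 (p-1)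
      rw [Real.rpow_one] at h
      rw [← h]; norm_num
    have h2 : (0:ℝ) < mm ^ (p-1) := Real.rpow_pos_of_pos (by linarith) _
    have h3 : (0:ℝ) < Nn ^ (p-1) := Real.rpow_pos_of_pos (by linarith) _
    have h4 : (0:ℝ) < mm ^ p := Real.rpow_pos_of_pos (by linarith) p
    have h5 : (0:ℝ) < Nn ^ p := Real.rpow_pos_of_pos (by linarith) p
    calc A * mm ^ p ≤ Nn * mm ^ p := mul_le_mul_of_nonneg_right hA2 h4.le
      _ = Nn * mm * mm ^ (p-1) := by rw [e1]; ring
      _ ≤ Nn * mm * Nn ^ (p-1) := by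
          apply mul_le_mul_of_nonneg_left h1 (by nlinarith)
      _ = mm * Nn ^ p := by rw [e2]; ring
      _ ≤ 5 * mm * Nn ^ p := by nlinarith [mul_pos (show (0:ℝ) < mm by linarith) h5]

lemma u_bound (p : ℝ) (hp : 0 < p) (hp1 : p < 1) (m j : ℤ) :
    |(|(j:ℝ)| ^ p - |((m+j : ℤ):ℝ)| ^ p)| ≤ |(m:ℝ)| ^ p := by
  have h1 := rpow_sub_abs_le p |(j:ℝ)| |((m+j : ℤ):ℝ)| hp.le hp1.le
    (abs_nonneg _) (abs_nonneg _)
  have h2 : |(|(j:ℝ)| - |((m+j : ℤ):ℝ)|)| ≤ |(m:ℝ)| := by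
    have h3 := abs_abs_sub_abs_le_abs_sub (j:ℝ) ((m+j : ℤ):ℝ)
    have h4 : |(j:ℝ) - ((m+j : ℤ):ℝ)| = |(m:ℝ)| := by
      push_cast
      rw [show (j:ℝ) - ((m:ℝ) + j) = -(m:ℝ) by ring, abs_neg]
    rw [h4] at h3
    exact h3
  calc |(|(j:ℝ)| ^ p - |((m+j : ℤ):ℝ)| ^ p)| ≤ |(|(j:ℝ)| - |((m+j : ℤ):ℝ)|)| ^ p := h1
    _ ≤ |(m:ℝ)| ^ p := Real.rpow_le_rpow (abs_nonneg _) h2 hp.le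

lemma cst_term_bound (p τ : ℝ) (hp : 0 < p) (hp1 : p < 1) (hτ : 0 < τ) (m j : ℤ) :
    |cst p τ m j - Real.exp (-(τ * |(m:ℝ)| ^ p) / 2)|
      ≤ τ/2 * |(|(j:ℝ)| ^ p - |((m+j : ℤ):ℝ)| ^ p)| := by
  set u : ℝ := |(j:ℝ)| ^ p - |((m+j : ℤ):ℝ)| ^ p with hu_def
  set x : ℝ := τ * |(m:ℝ)| ^ p with hx_def
  have hx : 0 ≤ x := by
    rw [hx_def]; positivity
  have hu : |u| ≤ |(m:ℝ)| ^ p := u_bound p hp hp1 m j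
  have hcst : cst p τ m j = Real.exp (-x/2) * Real.exp (-(τ*u)/2) := by
    rw [cst, ← Real.exp_add, hx_def, hu_def]
    congr 1
    ring
  have hq : (0:ℝ) < Real.exp (-x/2) := Real.exp_pos _
  have habs : |(-(τ*u)/2)| = τ * |u| / 2 := by
    rw [abs_div, abs_neg, abs_mul, abs_of_pos hτ]
    norm_num
  have hchain : Real.exp (-x/2) * Real.exp (τ*|u|/2) ≤ 1 := by
    rw [← Real.exp_add]
    apply Real.exp_le_one_iff.mpr
    have : τ * |u| ≤ x := by
      rw [hx_def]
      exact mul_le_mul_of_nonneg_left hu hτ.le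
    linarith
  calc |cst p τ m j - Real.exp (-(τ * |(m:ℝ)| ^ p)/2)|
      = Real.exp (-x/2) * |Real.exp (-(τ*u)/2) - 1| := by
        rw [hcst, show Real.exp (-(τ * |(m:ℝ)| ^ p)/2) = Real.exp (-x/2) by rw [hx_def],
          show Real.exp (-x/2) * Real.exp (-(τ*u)/2) - Real.exp (-x/2)
            = Real.exp (-x/2) * (Real.exp (-(τ*u)/2) - 1) by ring,
          abs_mul, abs_of_pos hq]
    _ ≤ Real.exp (-x/2) * (|(-(τ*u)/2)| * Real.exp |(-(τ*u)/2)|) := by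
        apply mul_le_mul_of_nonneg_left (abs_exp_sub_one_le' _) hq.le
    _ = (τ * |u| / 2) * (Real.exp (-x/2) * Real.exp (τ*|u|/2)) := by
        rw [habs]; ring
    _ ≤ (τ * |u| / 2) * 1 := by
        apply mul_le_mul_of_nonneg_left hchain (by positivity)
    _ = τ/2 * |u| := by ring

lemma key_sum (p τ : ℝ) (hp : 0 < p) (hp1 : p < 1) (hτ : 0 < τ) (n : ℕ) (hn : 1 ≤ n) (m : ℤ) :
    ∑ j ∈ Jn n, |cstN p τ n m j - Real.exp (-(τ * |(m:ℝ)| ^ p) / 2)|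
      ≤ 10 * τ * |(m:ℝ)| * ((2^n : ℝ)) ^ p
        + (2 * |(m:ℝ)| + 1) * Real.exp (-(τ * |(m:ℝ)| ^ p)) := by
  classical
  by_cases hm : m = 0
  · subst hm
    have hz : ∀ j ∈ Jn n, |cstN p τ n 0 j - Real.exp (-(τ * |((0:ℤ):ℝ)| ^ p) / 2)| = 0 := by
      intro j hj
      have e1 : cstN p τ n 0 j = Real.exp (-(τ * |((0:ℤ):ℝ)| ^ p) / 2) := by
        rw [cstN, if_pos (by rwa [zero_add]), cst]
        congr 1
        simp [Real.zero_rpow hp.ne']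
      rw [e1, sub_self, abs_zero]
    rw [Finset.sum_congr rfl hz, Finset.sum_const, smul_zero]
    positivity
  have hm1 : (1:ℝ) ≤ |(m:ℝ)| := by
    rw [← Int.cast_abs]
    exact_mod_cast Int.one_le_abs (by omega)
  set mr : ℝ := |(m:ℝ)| with hmr_def
  have hNcast : ((2^n : ℕ) : ℝ) = (2^n : ℝ) := by push_cast; ring
  have hN1 : (1:ℝ) ≤ (2^n : ℝ) := one_le_pow₀ (by norm_num)
  have hNp : (0:ℝ) < ((2^n : ℝ)) ^ p := Real.rpow_pos_of_pos (by linarith) p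
  set x : ℝ := τ * mr ^ p with hx_def
  have hmrp : (0:ℝ) < mr ^ p := Real.rpow_pos_of_pos (by linarith) p
  have hx0 : 0 ≤ x := by rw [hx_def]; positivity
  set q : ℝ := Real.exp (-x / 2) with hq_def
  have hq0 : (0:ℝ) < q := Real.exp_pos _
  have hmabs : ((m.natAbs : ℕ) : ℝ) = mr := by
    rw [hmr_def, ← Int.cast_abs]
    exact Nat.cast_natAbs (α := ℝ) m
  -- split the sum
  rw [← Finset.sum_filter_add_sum_filter_not (Jn n) (fun j => m + j ∈ Jn n)]
  -- the three pieces
  set T3 := (Jn n).filter (fun j => ¬(m + j ∈ Jn n)) with hT3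
  set TP := (Jn n).filter (fun j => m + j ∈ Jn n) with hTP
  set T2 := TP.filter (fun j => |j| ≤ 2*|m|) with hT2
  set T1 := TP.filter (fun j => ¬(|j| ≤ 2*|m|)) with hT1
  -- bound on T3
  have hS3 : ∑ j ∈ T3, |cstN p τ n m j - q| ≤
      (2 * mr + 1) * Real.exp (-x) + 5/2 * τ * mr * ((2^n : ℝ)) ^ p := by
    have hterm : ∀ j ∈ T3, |cstN p τ n m j - q| = q := by
      intro j hj
      rw [hT3, Finset.mem_filter] at hj
      rw [cstN, if_neg hj.2, zero_sub, abs_neg, abs_of_pos hq0]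
    rw [Finset.sum_congr rfl hterm, Finset.sum_const, nsmul_eq_mul]
    have hcard1 : (T3.card : ℝ) ≤ 2 * mr + 1 := by
      have := card_notP_le n hn m
      have h2 : (T3.card : ℝ) ≤ ((2 * m.natAbs + 1 : ℕ) : ℝ) := by exact_mod_cast this
      rw [Nat.cast_add, Nat.cast_mul, hmabs] at h2
      push_cast at h2 ⊢
      linarith
    have hcard2 : (T3.card : ℝ) ≤ (2^n : ℝ) := by
      rw [← hNcast, ← card_Jn n hn]
      exact_mod_cast Finset.card_le_card (Finset.filter_subset _ _)
    have hqle : q ≤ Real.exp (-x) + x/2 := by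
      rw [hq_def]
      exact exp_half_le x hx0
    have hcount := mcount p (T3.card : ℝ) mr ((2^n : ℝ)) hp hp1 (Nat.cast_nonneg _) hm1 hN1
      (by linarith) hcard2
    have hexp_pos : (0:ℝ) < Real.exp (-x) := Real.exp_pos _
    calc (T3.card : ℝ) * q ≤ (T3.card : ℝ) * (Real.exp (-x) + x/2) := by
          apply mul_le_mul_of_nonneg_left hqle (Nat.cast_nonneg _)
      _ = (T3.card : ℝ) * Real.exp (-x) + ((T3.card : ℝ) * mr ^ p) * (τ/2) := by
          rw [hx_def]; ring
      _ ≤ (2 * mr + 1) * Real.exp (-x) + (5 * mr * ((2^n : ℝ)) ^ p) * (τ/2) := by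
          have := mul_le_mul_of_nonneg_right hcount (by linarith : (0:ℝ) ≤ τ/2)
          have := mul_le_mul_of_nonneg_right hcard1 hexp_pos.le
          linarith
      _ = (2 * mr + 1) * Real.exp (-x) + 5/2 * τ * mr * ((2^n : ℝ)) ^ p := by ring
  -- bound on T2
  have hS2 : ∑ j ∈ T2, |cstN p τ n m j - q| ≤ 5/2 * τ * mr * ((2^n : ℝ)) ^ p := by
    have hterm : ∀ j ∈ T2, |cstN p τ n m j - q| ≤ τ/2 * mr ^ p := by
      intro j hj
      rw [hT2, Finset.mem_filter, hTP, Finset.mem_filter] at hj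
      rw [cstN, if_pos hj.1.2]
      calc |cst p τ m j - q| ≤ τ/2 * |(|(j:ℝ)| ^ p - |((m+j : ℤ):ℝ)| ^ p)| :=
            cst_term_bound p τ hp hp1 hτ m j
        _ ≤ τ/2 * mr ^ p := by
            apply mul_le_mul_of_nonneg_left (u_bound p hp hp1 m j) (by linarith)
    have hcard1 : (T2.card : ℝ) ≤ 4 * mr + 1 := by
      have := card_near_le n m
      have h2 : (T2.card : ℝ) ≤ ((4 * m.natAbs : ℕ) : ℝ) := by exact_mod_cast this
      rw [Nat.cast_mul, hmabs] at h2
      push_cast at h2 ⊢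
      linarith
    have hcard2 : (T2.card : ℝ) ≤ (2^n : ℝ) := by
      rw [← hNcast, ← card_Jn n hn]
      exact_mod_cast Finset.card_le_card
        ((Finset.filter_subset _ _).trans (Finset.filter_subset _ _))
    have hcount := mcount p (T2.card : ℝ) mr ((2^n : ℝ)) hp hp1 (Nat.cast_nonneg _) hm1 hN1
      hcard1 hcard2
    calc ∑ j ∈ T2, |cstN p τ n m j - q| ≤ ∑ _j ∈ T2, (τ/2 * mr ^ p) :=
          Finset.sum_le_sum hterm
      _ = (T2.card : ℝ) * mr ^ p * (τ/2) := by
          rw [Finset.sum_const, nsmul_eq_mul]; ring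
      _ ≤ (5 * mr * ((2^n : ℝ)) ^ p) * (τ/2) := by
          apply mul_le_mul_of_nonneg_right hcount (by linarith)
      _ = 5/2 * τ * mr * ((2^n : ℝ)) ^ p := by ring
  -- bound on T1
  have hS1 : ∑ j ∈ T1, |cstN p τ n m j - q| ≤ 2 * τ * mr * ((2^n : ℝ)) ^ p := by
    have hterm : ∀ j ∈ T1, |cstN p τ n m j - q| ≤ τ * mr * (p * |(j:ℝ)| ^ (p-1)) := by
      intro j hj
      rw [hT1, Finset.mem_filter, hTP, Finset.mem_filter] at hj
      obtain ⟨⟨hjJ, hjP⟩, hjfar⟩ := hj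
      push_neg at hjfar
      have hj0 : j ≠ 0 := (mem_Jn.mp hjJ).1
      have hmj0 : m + j ≠ 0 := (mem_Jn.mp hjP).1
      have hja : (0:ℝ) < |(j:ℝ)| := by
        rw [abs_pos]
        exact_mod_cast hj0
      have hmja : (0:ℝ) < |((m+j : ℤ):ℝ)| := by
        rw [abs_pos]
        exact_mod_cast hmj0
      have hfar : 2 * mr < |(j:ℝ)| := by
        rw [hmr_def, ← Int.cast_abs, ← Int.cast_abs]
        exact_mod_cast hjfar
      have hdist : |(|(j:ℝ)| - |((m+j : ℤ):ℝ)|)| ≤ mr := by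
        have h3 := abs_abs_sub_abs_le_abs_sub (j:ℝ) ((m+j : ℤ):ℝ)
        have h4 : |(j:ℝ) - ((m+j : ℤ):ℝ)| = mr := by
          push_cast
          rw [show (j:ℝ) - ((m:ℝ) + j) = -(m:ℝ) by ring, abs_neg, hmr_def]
        rw [h4] at h3
        exact h3
      have hmin : |(j:ℝ)|/2 ≤ min |(j:ℝ)| |((m+j : ℤ):ℝ)| := by
        apply le_min (by linarith)
        have : |(j:ℝ)| - mr ≤ |((m+j : ℤ):ℝ)| := by
          have := abs_sub_abs_le_abs_sub (j:ℝ) ((m+j : ℤ):ℝ)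
          have h4 : |(j:ℝ) - ((m+j : ℤ):ℝ)| = mr := by
            push_cast
            rw [show (j:ℝ) - ((m:ℝ) + j) = -(m:ℝ) by ring, abs_neg, hmr_def]
          linarith [hdist]
        linarith
      have hminp : min |(j:ℝ)| |((m+j : ℤ):ℝ)| ^ (p-1) ≤ (|(j:ℝ)|/2) ^ (p-1) :=
        Real.rpow_le_rpow_of_nonpos (by linarith) hmin (by linarith)
      have hhalf : (|(j:ℝ)|/2) ^ (p-1) ≤ 2 * |(j:ℝ)| ^ (p-1) := by
        rw [Real.div_rpow (abs_nonneg _) (by norm_num : (0:ℝ) ≤ 2)]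
        have h2p : (1:ℝ)/2 ≤ (2:ℝ) ^ (p-1) := by
          have := Real.rpow_le_rpow_of_exponent_le (by norm_num : (1:ℝ) ≤ 2)
            (by linarith : (-1:ℝ) ≤ p-1)
          rw [Real.rpow_neg_one] at this
          norm_num at this ⊢
          linarith
        have h2pp : (0:ℝ) < (2:ℝ) ^ (p-1) := Real.rpow_pos_of_pos (by norm_num) _
        have hjp : (0:ℝ) < |(j:ℝ)| ^ (p-1) := Real.rpow_pos_of_pos hja _
        rw [div_le_iff₀ h2pp]
        nlinarith
      have huu : |(|(j:ℝ)| ^ p - |((m+j : ℤ):ℝ)| ^ p)|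
          ≤ p * (2 * |(j:ℝ)| ^ (p-1)) * mr := by
        calc |(|(j:ℝ)| ^ p - |((m+j : ℤ):ℝ)| ^ p)|
            ≤ p * (min |(j:ℝ)| |((m+j : ℤ):ℝ)|) ^ (p-1)
              * |(|(j:ℝ)| - |((m+j : ℤ):ℝ)|)| :=
              rpow_diff_abs p _ _ hp.le hp1.le hja hmja
          _ ≤ p * (2 * |(j:ℝ)| ^ (p-1)) * mr := by
              have hminpos : (0:ℝ) < (min |(j:ℝ)| |((m+j : ℤ):ℝ)|) ^ (p-1) :=
                Real.rpow_pos_of_pos (lt_min hja hmja) _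
              apply mul_le_mul
              · apply mul_le_mul_of_nonneg_left (hminp.trans hhalf) hp.le
              · exact hdist
              · exact abs_nonneg _
              · positivity
      rw [cstN, if_pos hjP]
      calc |cst p τ m j - q| ≤ τ/2 * |(|(j:ℝ)| ^ p - |((m+j : ℤ):ℝ)| ^ p)| :=
            cst_term_bound p τ hp hp1 hτ m j
        _ ≤ τ/2 * (p * (2 * |(j:ℝ)| ^ (p-1)) * mr) := by
            apply mul_le_mul_of_nonneg_left huu (by linarith)
        _ = τ * mr * (p * |(j:ℝ)| ^ (p-1)) := by ring
    calc ∑ j ∈ T1, |cstN p τ n m j - q| ≤ ∑ j ∈ T1, τ * mr * (p * |(j:ℝ)| ^ (p-1)) :=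
          Finset.sum_le_sum hterm
      _ ≤ ∑ j ∈ Jn n, τ * mr * (p * |(j:ℝ)| ^ (p-1)) := by
          apply Finset.sum_le_sum_of_subset_of_nonneg
          · exact (Finset.filter_subset _ _).trans (Finset.filter_subset _ _)
          · intro i _ _
            have : (0:ℝ) ≤ |(i:ℝ)| ^ (p-1) := Real.rpow_nonneg (abs_nonneg _) _
            positivity
      _ = τ * mr * ∑ j ∈ Jn n, p * |(j:ℝ)| ^ (p-1) := by
          rw [Finset.mul_sum]
      _ ≤ τ * mr * (2 * ((2^n : ℝ)) ^ p) := by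
          apply mul_le_mul_of_nonneg_left (sum_abs_rpow_le p hp hp1.le n hn) (by positivity)
      _ = 2 * τ * mr * ((2^n : ℝ)) ^ p := by ring
  -- combine
  have hsplit : ∑ j ∈ TP, |cstN p τ n m j - q|
      = ∑ j ∈ T2, |cstN p τ n m j - q| + ∑ j ∈ T1, |cstN p τ n m j - q| := by
    rw [hT2, hT1]
    exact (Finset.sum_filter_add_sum_filter_not TP _ _).symm
  rw [hsplit]
  have hfin : 5/2 * τ * mr * ((2^n : ℝ)) ^ p + 2 * τ * mr * ((2^n : ℝ)) ^ p
      + ((2 * mr + 1) * Real.exp (-x) + 5/2 * τ * mr * ((2^n : ℝ)) ^ p)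
      ≤ 10 * τ * mr * ((2^n : ℝ)) ^ p + (2 * mr + 1) * Real.exp (-x) := by
    nlinarith [mul_pos (mul_pos hτ (show (0:ℝ) < mr by linarith)) hNp]
  have hxeq : Real.exp (-(τ * |(m:ℝ)| ^ p)) = Real.exp (-x) := by
    rw [hx_def, hmr_def]
  rw [hxeq]
  linarith [hS1, hS2, hS3]

/-! ### Fourier reindexing and geometric sum -/

lemma sum_oIdx {β : Type*} [AddCommMonoid β] (n : ℕ) (hn : 1 ≤ n) (g : ℤ → β) :
    ∑ j ∈ Jn n, g (oIdx n j) = ∑ r ∈ Finset.range (2^n), g (r:ℤ) := by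
  have hc : ((2^n : ℕ) : ℤ) = 2 * 2^(n-1) := by push_cast; exact two_pow_int n hn
  apply Finset.sum_nbij' (fun j => (oIdx n j).toNat)
    (fun r => if (r:ℤ) < 2^(n-1) then (r:ℤ) - 2^(n-1) else (r:ℤ) - 2^(n-1) + 1)
  · intro a ha
    rw [mem_Jn] at ha
    try dsimp only
    rw [Finset.mem_range, oIdx]
    split_ifs <;> omega
  · intro a ha
    rw [Finset.mem_range] at ha
    try dsimp only
    rw [mem_Jn]
    split_ifs <;> omega
  · intro a ha
    rw [mem_Jn] at ha
    try dsimp only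
    rw [oIdx]
    split_ifs <;> omega
  · intro a ha
    rw [Finset.mem_range] at ha
    try dsimp only
    rw [oIdx]
    split_ifs <;> omega
  · intro a ha
    rw [mem_Jn] at ha
    try dsimp only
    congr 1
    rw [oIdx]
    split_ifs <;> omega

lemma fourier_sum (n : ℕ) (hn : 1 ≤ n) (k l : ℕ) (hk : k < 2^n) (hl : l < 2^n) (m : ℤ) :
    ∑ j ∈ Jn n, Complex.exp (2 * (Real.pi : ℂ) * Complex.I *
        ((((k : ℤ) - (l : ℤ)) * oIdx n j + (k : ℤ) * m : ℤ) : ℂ) / (2 ^ n : ℂ))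
      = if k = l then (2^n : ℂ) * Complex.exp (2 * (Real.pi : ℂ) * Complex.I *
          (((k : ℤ) * m : ℤ) : ℂ) / (2 ^ n : ℂ)) else 0 := by
  have hN0 : ((2:ℂ)^n) ≠ 0 := pow_ne_zero _ two_ne_zero
  set w : ℂ := 2 * (Real.pi : ℂ) * Complex.I * (((k : ℤ) - (l : ℤ) : ℤ) : ℂ) / (2 ^ n : ℂ)
    with hw
  set v : ℂ := 2 * (Real.pi : ℂ) * Complex.I * (((k : ℤ) * m : ℤ) : ℂ) / (2 ^ n : ℂ) with hv
  have hterm : ∀ r : ℕ, Complex.exp (2 * (Real.pi : ℂ) * Complex.I *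
      ((((k : ℤ) - (l : ℤ)) * (r:ℤ) + (k : ℤ) * m : ℤ) : ℂ) / (2 ^ n : ℂ))
      = Complex.exp w ^ r * Complex.exp v := by
    intro r
    rw [← Complex.exp_nat_mul, ← Complex.exp_add]
    congr 1
    rw [hw, hv]
    push_cast
    ring
  rw [sum_oIdx n hn (fun t => Complex.exp (2 * (Real.pi : ℂ) * Complex.I *
      ((((k : ℤ) - (l : ℤ)) * t + (k : ℤ) * m : ℤ) : ℂ) / (2 ^ n : ℂ)))]
  rw [Finset.sum_congr rfl (fun r _ => hterm r), ← Finset.sum_mul]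
  by_cases hkl : k = l
  · subst hkl
    have hw0 : w = 0 := by
      rw [hw]
      simp
    rw [if_pos rfl, hw0]
    simp [Finset.card_range]
  · rw [if_neg hkl]
    have hzne : Complex.exp w ≠ 1 := by
      intro hcon
      obtain ⟨t, ht⟩ := Complex.exp_eq_one_iff.mp hcon
      rw [hw] at ht
      have hI : Complex.I ≠ 0 := Complex.I_ne_zero
      have hπ : (Real.pi : ℂ) ≠ 0 := by
        exact_mod_cast Complex.ofReal_ne_zero.mpr Real.pi_ne_zero
      have h2 : (2:ℂ) * (Real.pi : ℂ) * Complex.I ≠ 0 := by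
        simp [hπ, hI]
      have hint : (((k : ℤ) - (l : ℤ) : ℤ) : ℂ) = (t : ℂ) * (2^n : ℂ) := by
        have h7 := congrArg (fun z : ℂ => z * (2^n : ℂ)) ht
        rw [div_mul_cancel₀ _ hN0] at h7
        have h6 : 2 * (Real.pi : ℂ) * Complex.I * (((k : ℤ) - (l : ℤ) : ℤ) : ℂ)
            = 2 * (Real.pi : ℂ) * Complex.I * ((t : ℂ) * (2^n : ℂ)) := by
          rw [h7]; ring
        exact mul_left_cancel₀ h2 h6
      have hint2 : ((k : ℤ) - (l : ℤ)) = t * 2^n := by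
        exact_mod_cast hint
      have hkl2 : ((k:ℤ) - (l:ℤ)) ≠ 0 := by
        intro h
        apply hkl
        omega
      have hcast : ((2^n : ℕ) : ℤ) = 2^n := by push_cast; ring
      have hband : |(k:ℤ) - (l:ℤ)| < 2^n := by
        rw [abs_lt]
        omega
      have ht0 : t ≠ 0 := by
        rintro rfl
        simp at hint2
        exact hkl2 hint2
      have h1t : (1:ℤ) ≤ |t| := Int.one_le_abs ht0
      have h2n : (0:ℤ) ≤ 2^n := by positivity
      have habs : |(k:ℤ)-(l:ℤ)| = |t| * 2^n := by
        rw [hint2, abs_mul, abs_of_nonneg h2n]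
      nlinarith [mul_nonneg (by linarith : (0:ℤ) ≤ |t| - 1) h2n]
    have hgeom := geom_sum_eq hzne (2^n)
    rw [hgeom]
    have hpow : Complex.exp w ^ (2^n : ℕ) = 1 := by
      rw [← Complex.exp_nat_mul]
      have : ((2^n : ℕ) : ℂ) * w = (((k : ℤ) - (l : ℤ) : ℤ) : ℂ) * (2 * (Real.pi : ℂ) * Complex.I) := by
        rw [hw]
        push_cast
        field_simp
      rw [this]
      exact Complex.exp_int_mul_two_pi_mul_I _
    rw [hpow]
    simp


/-- There is a constant `C > 0`, independent of `k, l, m, n, p, τ`, such that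
the residual `ε_{mnkl} = (Ã_{m,n})_{kl} − ψ_m(θ_l) δ_{kl}` satisfies
`|ε_{mnkl}| ≤ C τ |m| / N^{1−p} + (2|m|+1) e^{−τ|m|^p} / N`. -/
theorem residual_bound :
    ∃ C : ℝ, 0 < C ∧
      ∀ (p τ : ℝ), p ∈ Set.Ioo (0 : ℝ) 1 → 0 < τ →
      ∀ (n : ℕ), 1 ≤ n → ∀ (m : ℤ) (k l : ℕ), k < 2 ^ n → l < 2 ^ n →
        ‖Atilde p τ n m k l
            - psi p τ m (2 * Real.pi * l / 2 ^ n) * (if k = l then 1 else 0)‖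
          ≤ C * τ * |(m : ℝ)| / ((2 ^ n : ℝ)) ^ (1 - p)
            + (2 * |(m : ℝ)| + 1) * Real.exp (-(τ * |(m : ℝ)| ^ p)) / (2 ^ n : ℝ) := by
  refine ⟨10, by norm_num, ?_⟩
  intro p τ hpmem hτ n hn m k l hk hl
  obtain ⟨hp, hp1⟩ := hpmem
  have hN0 : ((2:ℂ)^n) ≠ 0 := pow_ne_zero _ two_ne_zero
  have hNR : (0:ℝ) < (2^n : ℝ) := by positivity
  set q : ℝ := Real.exp (-(τ * |(m:ℝ)| ^ p) / 2) with hq_def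
  set F : ℤ → ℂ := fun j => Complex.exp (2 * (Real.pi : ℂ) * Complex.I *
      ((((k : ℤ) - (l : ℤ)) * oIdx n j + (k : ℤ) * m : ℤ) : ℂ) / (2 ^ n : ℂ)) with hF
  have hA : Atilde p τ n m k l
      = (1 / (2 ^ n : ℂ)) * ∑ j ∈ Jn n, F j * ((cstN p τ n m j : ℝ) : ℂ) := rfl
  have hfour : ∑ j ∈ Jn n, F j = if k = l then (2^n : ℂ) * Complex.exp
      (2 * (Real.pi : ℂ) * Complex.I * (((k : ℤ) * m : ℤ) : ℂ) / (2 ^ n : ℂ)) else 0 :=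
    fourier_sum n hn k l hk hl m
  have hpsi : psi p τ m (2 * Real.pi * l / 2 ^ n) * (if k = l then 1 else 0)
      = (1 / (2 ^ n : ℂ)) * ∑ j ∈ Jn n, F j * (q : ℂ) := by
    rw [← Finset.sum_mul, hfour]
    by_cases hkl : k = l
    · subst hkl
      rw [if_pos rfl, if_pos rfl, psi, mul_one]
      have hexp : Complex.I * (m : ℂ) * ((2 * Real.pi * k / 2 ^ n : ℝ) : ℂ)
          = 2 * (Real.pi : ℂ) * Complex.I * (((k : ℤ) * m : ℤ) : ℂ) / (2 ^ n : ℂ) := by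
        push_cast
        ring
      rw [hexp, hq_def, Complex.ofReal_exp]
      push_cast
      field_simp
    · rw [if_neg hkl, if_neg hkl, mul_zero, zero_mul, mul_zero]
  have hdiff : Atilde p τ n m k l
        - psi p τ m (2 * Real.pi * l / 2 ^ n) * (if k = l then 1 else 0)
      = (1 / (2 ^ n : ℂ)) * ∑ j ∈ Jn n, F j * (((cstN p τ n m j - q : ℝ)) : ℂ) := by
    rw [hA, hpsi, ← mul_sub, ← Finset.sum_sub_distrib]
    congr 1
    apply Finset.sum_congr rfl
    intro j _
    push_cast
    ring
  rw [hdiff]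
  have hFabs : ∀ j : ℤ, ‖F j‖ = 1 := by
    intro j
    show ‖Complex.exp (2 * (Real.pi : ℂ) * Complex.I *
      ((((k : ℤ) - (l : ℤ)) * oIdx n j + (k : ℤ) * m : ℤ) : ℂ) / (2 ^ n : ℂ))‖ = 1
    have he : 2 * (Real.pi : ℂ) * Complex.I *
        ((((k : ℤ) - (l : ℤ)) * oIdx n j + (k : ℤ) * m : ℤ) : ℂ) / (2 ^ n : ℂ)
        = ((2 * Real.pi * ((((k : ℤ) - (l : ℤ)) * oIdx n j + (k : ℤ) * m : ℤ) : ℝ)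
            / (2 ^ n : ℝ) : ℝ) : ℂ) * Complex.I := by
      push_cast
      ring
    rw [he, Complex.norm_exp_ofReal_mul_I]
  have habs : ‖(1 / (2 ^ n : ℂ)) * ∑ j ∈ Jn n, F j
        * (((cstN p τ n m j - q : ℝ)) : ℂ)‖
      ≤ (1 / (2^n : ℝ)) * ∑ j ∈ Jn n, |cstN p τ n m j - q| := by
    rw [norm_mul]
    have h1 : ‖(1 / (2 ^ n : ℂ))‖ = 1 / (2^n : ℝ) := by
      rw [norm_div, norm_one, norm_pow]
      norm_num
    rw [h1]
    apply mul_le_mul_of_nonneg_left _ (by positivity)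
    calc ‖∑ j ∈ Jn n, F j * (((cstN p τ n m j - q : ℝ)) : ℂ)‖
        ≤ ∑ j ∈ Jn n, ‖F j * (((cstN p τ n m j - q : ℝ)) : ℂ)‖ :=
          norm_sum_le _ _
      _ = ∑ j ∈ Jn n, |cstN p τ n m j - q| := by
          apply Finset.sum_congr rfl
          intro j _
          rw [norm_mul, hFabs j, one_mul, Complex.norm_real, Real.norm_eq_abs]
  have hkey := key_sum p τ hp hp1 hτ n hn m
  have hfinal : (1 / (2^n : ℝ)) * (10 * τ * |(m:ℝ)| * ((2^n : ℝ)) ^ p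
        + (2 * |(m:ℝ)| + 1) * Real.exp (-(τ * |(m:ℝ)| ^ p)))
      = 10 * τ * |(m : ℝ)| / ((2 ^ n : ℝ)) ^ (1 - p)
        + (2 * |(m : ℝ)| + 1) * Real.exp (-(τ * |(m : ℝ)| ^ p)) / (2 ^ n : ℝ) := by
    have hsplit : ((2^n : ℝ)) ^ (1-p) * ((2^n : ℝ)) ^ p = (2^n : ℝ) := by
      rw [← Real.rpow_add hNR]
      norm_num
    have hppos : (0:ℝ) < ((2^n : ℝ)) ^ p := Real.rpow_pos_of_pos hNR p
    have h1mp : (0:ℝ) < ((2^n : ℝ)) ^ (1-p) := Real.rpow_pos_of_pos hNR (1-p)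
    field_simp
    linear_combination (10 * τ * |(m:ℝ)|) * hsplit
  calc ‖(1 / (2 ^ n : ℂ)) * ∑ j ∈ Jn n, F j
        * (((cstN p τ n m j - q : ℝ)) : ℂ)‖
      ≤ (1 / (2^n : ℝ)) * ∑ j ∈ Jn n, |cstN p τ n m j - q| := habs
    _ ≤ (1 / (2^n : ℝ)) * (10 * τ * |(m:ℝ)| * ((2^n : ℝ)) ^ p
        + (2 * |(m:ℝ)| + 1) * Real.exp (-(τ * |(m:ℝ)| ^ p))) := by
        apply mul_le_mul_of_nonneg_left hkey (by positivity)
    _ = _ := hfinal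

end QECD
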